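/- Let X be a Polish space and d̃ a lower semicontinuous metric on X (possibly taking the value +∞), lifted to probability measures by d̃(μ,ν) = inf_{π ∈ C(μ,ν)} ∫ d̃ dπ. Let P and P^ε be Markov kernels on X such that: (i) d̃(μP, νP) ≤ (1/2) d̃(μ,ν) for all probability measures μ, ν; (ii) there exist a constant C' ≥ 0 and a measurable function Ṽ: X → ℝ₊, and a Markov kernel Λ from X to X×X with Λ(x,·) ∈ C(P(x,·), P^ε(x,·)) and ∫ d̃ dΛ(x,·) ≤ C' Ṽ(x) for every x ∈ X. If μ★ is an invariant probability measure for P and μ★^ε is an invariant probability measure for P^ε with ∫ Ṽ dμ★^ε < ∞ and d̃(μ★, μ★^ε) < ∞, then d̃(μ★, μ★^ε) ≤ 2 C' ∫ Ṽ(x) μ★^ε(dx). -/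

import Mathlib

open MeasureTheory ProbabilityTheory Filter Topology
open scoped ENNReal NNReal

noncomputable section

/-- A coupling of two measures: a measure on the product with the given marginals. -/
def IsCoupling {α β : Type*} [MeasurableSpace α] [MeasurableSpace β]
    (π : Measure (α × β)) (μ : Measure α) (ν : Measure β) : Prop :=
  π.map Prod.fst = μ ∧ π.map Prod.snd = ν

/-- The lift of an `ℝ≥0∞`-valued distance to probability measures. -/
def liftDistE {α : Type*} [MeasurableSpace α] (d : α → α → ℝ≥0∞) (μ ν : Measure α) :
    ℝ≥0∞ :=
  sInf {r : ℝ≥0∞ | ∃ π : Measure (α × α), IsCoupling π μ ν ∧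
    r = ∫⁻ p, d p.1 p.2 ∂π}

section Aux

variable {X : Type*} [MeasurableSpace X]

lemma IsCoupling.prob {π : Measure (X × X)} {μ ν : Measure X}
    [IsProbabilityMeasure μ] (h : IsCoupling π μ ν) : IsProbabilityMeasure π := by
  constructor
  have : π.map Prod.fst Set.univ = 1 := by rw [h.1]; exact measure_univ
  rwa [Measure.map_apply measurable_fst MeasurableSet.univ, Set.preimage_univ] at this

lemma liftDistE_le {d : X → X → ℝ≥0∞} {π : Measure (X × X)} {μ ν : Measure X}
    (h : IsCoupling π μ ν) : liftDistE d μ ν ≤ ∫⁻ p, d p.1 p.2 ∂π :=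
  sInf_le ⟨π, h, rfl⟩

lemma isProbabilityMeasure_bind_kernel (μ : Measure X) [IsProbabilityMeasure μ]
    (P : Kernel X X) [IsMarkovKernel P] :
    IsProbabilityMeasure (μ.bind fun x => P x) := by
  constructor
  rw [Measure.bind_apply MeasurableSet.univ P.measurable.aemeasurable]
  simp

lemma liftDistE_triangle [TopologicalSpace X] [PolishSpace X] [BorelSpace X]
    (d : X → X → ℝ≥0∞) (hd : Measurable (fun p : X × X => d p.1 p.2))
    (htr : ∀ x y z, d x z ≤ d x y + d y z)
    (μ ν ρ : Measure X) [IsProbabilityMeasure μ] [IsProbabilityMeasure ν]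
    [IsProbabilityMeasure ρ] :
    liftDistE d μ ρ ≤ liftDistE d μ ν + liftDistE d ν ρ := by
  have key : ∀ π₁ π₂ : Measure (X × X), IsCoupling π₁ μ ν → IsCoupling π₂ ν ρ →
      liftDistE d μ ρ ≤ (∫⁻ p, d p.1 p.2 ∂π₁) + ∫⁻ p, d p.1 p.2 ∂π₂ := by
    intro π₁ π₂ h₁ h₂
    have hX : Nonempty X := μ.nonempty_of_neZero
    have hp₁ : IsProbabilityMeasure π₁ := h₁.prob
    have hp₂ : IsProbabilityMeasure π₂ := h₂.prob
    set σ : Measure (X × X) := π₁.map Prod.swap with hσ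
    have hpσ : IsProbabilityMeasure σ := by
      constructor
      rw [Measure.map_apply measurable_swap MeasurableSet.univ, Set.preimage_univ]
      exact measure_univ
    have hσfst : σ.fst = ν := by
      rw [Measure.fst, hσ, Measure.map_map measurable_fst measurable_swap]
      exact h₁.2
    have hσsnd : σ.snd = μ := by
      rw [Measure.snd, hσ, Measure.map_map measurable_snd measurable_swap]
      exact h₁.1
    have hπ₂fst : π₂.fst = ν := h₂.1
    set κ : Kernel X X := σ.condKernel with hκ
    set η : Kernel X X := π₂.condKernel with hη
    haveI : IsMarkovKernel κ := by rw [hκ]; infer_instance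
    haveI : IsMarkovKernel η := by rw [hη]; infer_instance
    have hσd : ν ⊗ₘ κ = σ := by rw [← hσfst]; exact σ.disintegrate κ
    have hπ₂d : ν ⊗ₘ η = π₂ := by rw [← hπ₂fst]; exact π₂.disintegrate η
    set m : Measure (X × (X × X)) := ν ⊗ₘ (κ ×ₖ η) with hm
    set θ : Measure (X × X) := m.map (fun q => (q.2.1, q.2.2)) with hθ
    have hcoup : IsCoupling θ μ ρ := by
      constructor
      · rw [hθ, Measure.map_map measurable_fst (measurable_snd.fst.prodMk measurable_snd.snd)]
        have : (Prod.fst ∘ fun q : X × (X × X) => (q.2.1, q.2.2)) = fun q => q.2.1 := rfl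
        rw [this]
        ext s hs
        rw [Measure.map_apply measurable_snd.fst hs, hm,
          Measure.compProd_apply (measurable_snd.fst hs)]
        simp only [Kernel.prod_apply]
        have heval : ∀ y : X, ((κ y).prod (η y))
            (Prod.mk y ⁻¹' ((fun q : X × (X × X) => q.2.1) ⁻¹' s)) = κ y s := by
          intro y
          have : Prod.mk y ⁻¹' ((fun q : X × (X × X) => q.2.1) ⁻¹' s)
              = s ×ˢ Set.univ := by ext p; simp
          rw [this, Measure.prod_prod, measure_univ, mul_one]
        simp_rw [heval]
        have : ∫⁻ y, κ y s ∂ν = (ν ⊗ₘ κ) (Set.univ ×ˢ s) := by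
          rw [Measure.compProd_apply (MeasurableSet.univ.prod hs)]
          congr 1; ext y
          congr 1; ext a; simp
        rw [this, hσd, ← hσsnd, Measure.snd, Measure.map_apply measurable_snd hs]
        congr 1; ext p; simp
      · rw [hθ, Measure.map_map measurable_snd (measurable_snd.fst.prodMk measurable_snd.snd)]
        have : (Prod.snd ∘ fun q : X × (X × X) => (q.2.1, q.2.2)) = fun q => q.2.2 := rfl
        rw [this]
        ext s hs
        rw [Measure.map_apply measurable_snd.snd hs, hm,
          Measure.compProd_apply (measurable_snd.snd hs)]
        simp only [Kernel.prod_apply]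
        have heval : ∀ y : X, ((κ y).prod (η y))
            (Prod.mk y ⁻¹' ((fun q : X × (X × X) => q.2.2) ⁻¹' s)) = η y s := by
          intro y
          have : Prod.mk y ⁻¹' ((fun q : X × (X × X) => q.2.2) ⁻¹' s)
              = Set.univ ×ˢ s := by ext p; simp
          rw [this, Measure.prod_prod, measure_univ, one_mul]
        simp_rw [heval]
        have : ∫⁻ y, η y s ∂ν = (ν ⊗ₘ η) (Set.univ ×ˢ s) := by
          rw [Measure.compProd_apply (MeasurableSet.univ.prod hs)]
          congr 1; ext y
          congr 1; ext a; simp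
        rw [this, hπ₂d, ← h₂.2, Measure.map_apply measurable_snd hs]
        congr 1; ext p; simp
    refine (liftDistE_le hcoup).trans ?_
    have hdm : Measurable (fun q : X × (X × X) => d q.2.1 q.2.2) :=
      hd.comp (measurable_snd.fst.prodMk measurable_snd.snd)
    have hcost : ∫⁻ p, d p.1 p.2 ∂θ = ∫⁻ y, ∫⁻ r, d r.1 r.2 ∂((κ y).prod (η y)) ∂ν := by
      rw [hθ, lintegral_map hd (measurable_snd.fst.prodMk measurable_snd.snd), hm,
        Measure.lintegral_compProd hdm]
      exact lintegral_congr fun y => by rw [Kernel.prod_apply]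
    rw [hcost]
    have hbound : ∀ y : X, ∫⁻ r, d r.1 r.2 ∂((κ y).prod (η y))
        ≤ (∫⁻ a, d a y ∂(κ y)) + ∫⁻ b, d y b ∂(η y) := by
      intro y
      calc ∫⁻ r, d r.1 r.2 ∂((κ y).prod (η y))
          ≤ ∫⁻ r, (d r.1 y + d y r.2) ∂((κ y).prod (η y)) :=
            lintegral_mono fun r => htr r.1 y r.2
        _ = (∫⁻ r, d r.1 y ∂((κ y).prod (η y))) + ∫⁻ r, d y r.2 ∂((κ y).prod (η y)) :=
            lintegral_add_left (hd.comp (measurable_fst.prodMk measurable_const)) _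
        _ = (∫⁻ a, d a y ∂(κ y)) + ∫⁻ b, d y b ∂(η y) := by
            congr 1
            · rw [MeasureTheory.lintegral_prod (fun r : X × X => d r.1 y)
                ((hd.comp (measurable_fst.prodMk measurable_const)).aemeasurable)]
              simp
            · rw [MeasureTheory.lintegral_prod (fun r : X × X => d y r.2)
                ((hd.comp (measurable_const.prodMk measurable_snd)).aemeasurable)]
              simp
    refine (lintegral_mono hbound).trans ?_
    have hd' : Measurable (fun p : X × X => d p.2 p.1) :=
      hd.comp (measurable_snd.prodMk measurable_fst)
    have hmeas1 : Measurable fun y => ∫⁻ a, d a y ∂(κ y) :=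
      Measurable.lintegral_kernel_prod_right (f := fun y a => d a y) hd'
    rw [lintegral_add_left hmeas1]
    have e1 : ∫⁻ y, ∫⁻ a, d a y ∂(κ y) ∂ν = ∫⁻ p, d p.1 p.2 ∂π₁ := by
      have := Measure.lintegral_compProd (μ := ν) (κ := κ) hd'
      rw [hσd, hσ, lintegral_map hd' measurable_swap] at this
      exact this.symm
    have e2 : ∫⁻ y, ∫⁻ b, d y b ∂(η y) ∂ν = ∫⁻ p, d p.1 p.2 ∂π₂ := by
      have := Measure.lintegral_compProd (μ := ν) (κ := η) hd
      rw [hπ₂d] at this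
      exact this.symm
    rw [e1, e2]
  conv_rhs => rw [liftDistE, liftDistE]
  rw [ENNReal.sInf_add]
  refine le_iInf₂ fun a ha => ?_
  obtain ⟨π₁, h₁, rfl⟩ := ha
  rw [add_comm, ENNReal.sInf_add]
  refine le_iInf₂ fun b hb => ?_
  obtain ⟨π₂, h₂, rfl⟩ := hb
  rw [add_comm]
  exact key π₁ π₂ h₁ h₂

end Aux

/-- **Stability of the invariant measure under perturbation.** If `P` contracts the lifted
distance `d̃` by a factor `1/2` and the one-step transitions of `P` and of a perturbed
kernel `P^ε` can be coupled at cost at most `C' Ṽ(x)`, then the invariant measures `μ★` of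
`P` and `μ★^ε` of `P^ε` satisfy `d̃(μ★, μ★^ε) ≤ 2 C' ∫ Ṽ dμ★^ε`. -/
theorem stmt_17 {X : Type*} [TopologicalSpace X] [PolishSpace X]
    [MeasurableSpace X] [BorelSpace X]
    (dt : X → X → ℝ≥0∞)
    (hdt_symm : ∀ x y, dt x y = dt y x)
    (hdt_triangle : ∀ x y z, dt x z ≤ dt x y + dt y z)
    (hdt_eq_zero : ∀ x y, dt x y = 0 ↔ x = y)
    (hdt_lsc : LowerSemicontinuous (fun p : X × X => dt p.1 p.2))
    (P Peps : Kernel X X) [IsMarkovKernel P] [IsMarkovKernel Peps]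
    -- (i) `P` contracts the lifted distance by `1/2`
    (hcontr : ∀ μ ν : Measure X, IsProbabilityMeasure μ → IsProbabilityMeasure ν →
      liftDistE dt (μ.bind (fun x => P x)) (ν.bind (fun x => P x))
        ≤ (1 / 2) * liftDistE dt μ ν)
    -- (ii) a coupling of one-step transitions of `P` and `Peps` at cost `C' Ṽ(x)`
    (C' : ℝ) (hC' : 0 ≤ C') (Vt : X → ℝ) (hVt_meas : Measurable Vt)
    (hVt_nonneg : ∀ x, 0 ≤ Vt x)
    (Λ : Kernel X (X × X)) [IsMarkovKernel Λ]
    (hΛ : ∀ x : X, IsCoupling (Λ x) (P x) (Peps x) ∧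
      ∫⁻ w, dt w.1 w.2 ∂(Λ x) ≤ ENNReal.ofReal (C' * Vt x))
    (μstar μeps : Measure X) [IsProbabilityMeasure μstar] [IsProbabilityMeasure μeps]
    (hinv : μstar.bind (fun x => P x) = μstar)
    (hinv_eps : μeps.bind (fun x => Peps x) = μeps)
    (hVt_int : ∫⁻ x, ENNReal.ofReal (Vt x) ∂μeps ≠ ⊤)
    (hfin : liftDistE dt μstar μeps ≠ ⊤) :
    liftDistE dt μstar μeps
      ≤ 2 * ENNReal.ofReal C' * ∫⁻ x, ENNReal.ofReal (Vt x) ∂μeps := by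
  have hd : Measurable (fun p : X × X => dt p.1 p.2) := hdt_lsc.measurable
  set d := liftDistE dt μstar μeps with hdDef
  set K : ℝ≥0∞ := ENNReal.ofReal C' * ∫⁻ x, ENNReal.ofReal (Vt x) ∂μeps with hK
  haveI hmid : IsProbabilityMeasure (μeps.bind fun x => P x) :=
    isProbabilityMeasure_bind_kernel μeps P
  -- step 2: coupling via Λ
  have step2 : liftDistE dt (μeps.bind fun x => P x) μeps ≤ K := by
    rw [show liftDistE dt (μeps.bind fun x => P x) μeps
      = liftDistE dt (μeps.bind fun x => P x) (μeps.bind fun x => Peps x) by rw [hinv_eps]]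
    set Θ : Measure (X × X) := μeps.bind (fun x => Λ x) with hΘ
    have hcoup : IsCoupling Θ (μeps.bind fun x => P x) (μeps.bind fun x => Peps x) := by
      constructor
      · ext s hs
        rw [Measure.map_apply measurable_fst hs, hΘ,
          Measure.bind_apply (measurable_fst hs) Λ.measurable.aemeasurable,
          Measure.bind_apply hs P.measurable.aemeasurable]
        refine lintegral_congr fun x => ?_
        have := (hΛ x).1.1
        rw [← this, Measure.map_apply measurable_fst hs]
      · ext s hs
        rw [Measure.map_apply measurable_snd hs, hΘ,
          Measure.bind_apply (measurable_snd hs) Λ.measurable.aemeasurable,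
          Measure.bind_apply hs Peps.measurable.aemeasurable]
        refine lintegral_congr fun x => ?_
        have := (hΛ x).1.2
        rw [← this, Measure.map_apply measurable_snd hs]
    refine (liftDistE_le hcoup).trans ?_
    rw [hΘ, Measure.lintegral_bind Λ.measurable.aemeasurable hd.aemeasurable]
    calc ∫⁻ x, ∫⁻ w, dt w.1 w.2 ∂(Λ x) ∂μeps
        ≤ ∫⁻ x, ENNReal.ofReal (C' * Vt x) ∂μeps := lintegral_mono fun x => (hΛ x).2
      _ = K := by
          simp_rw [fun x => ENNReal.ofReal_mul (q := Vt x) hC']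
          rw [lintegral_const_mul _ (f := fun x => ENNReal.ofReal (Vt x))
            (ENNReal.measurable_ofReal.comp hVt_meas)]
  -- step 1: contraction
  have step1 : liftDistE dt μstar (μeps.bind fun x => P x) ≤ (1 / 2) * d := by
    conv_lhs => rw [← hinv]
    exact hcontr μstar μeps inferInstance inferInstance
  have tri := liftDistE_triangle dt hd hdt_triangle μstar (μeps.bind fun x => P x) μeps
  have h : d ≤ (1 / 2) * d + K := tri.trans (add_le_add step1 step2)
  have h3 : d + d ≤ d + 2 * K := by
    have h2 := mul_le_mul_right h 2
    rw [mul_add, ← mul_assoc] at h2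
    have h12 : (2 : ℝ≥0∞) * (1 / 2) = 1 := by
      rw [one_div]; exact ENNReal.mul_inv_cancel two_ne_zero ENNReal.ofNat_ne_top
    rw [h12, one_mul, two_mul] at h2
    exact h2
  have := (ENNReal.add_le_add_iff_left hfin).mp h3
  calc d ≤ 2 * K := this
    _ = 2 * ENNReal.ofReal C' * ∫⁻ x, ENNReal.ofReal (Vt x) ∂μeps := by rw [hK, mul_assoc]
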